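/- arXiv:1805.04427 — 2 statements merged into one kernel-verified Lean document; each statement's English description precedes it below -/
import Mathlib

section
/- Let n be an integer with n ≡ 5 (mod 8) and let m be an integer with m ≥ 4n − 4. Let l_a and l_b be positive integers of opposite parity (one odd, one even) with l_a + 2 < l_b and l_b + 2 ≤ m. Then the product of disjoint transpositions (l_a, l_a + 2)(l_b, l_b + 2) belongs to C(n, m). -/
set_option maxHeartbeats 1600000
set_option linter.unusedVariables false

/-- The underlying function of the `n`-crossing permutation `π_j` over `{1, …, m}` (as a
function on `ℕ`): it sends `j + k` to `j + n - 1 - k` for `0 ≤ k ≤ n - 1` and fixes all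
other points. -/
def crossFun (n j i : ℕ) : ℕ :=
  if j ≤ i ∧ i < j + n then 2 * j + n - 1 - i else i

lemma crossFun_involutive (n j : ℕ) : Function.Involutive (crossFun n j) := by
  intro i
  unfold crossFun
  split_ifs <;> omega

/-- The `n`-crossing permutation `π_j`, viewed as a permutation of `ℕ` fixing every point
outside `{j, …, j + n - 1}`. -/
def crossPerm (n j : ℕ) : Equiv.Perm ℕ :=
  Function.Involutive.toPerm _ (crossFun_involutive n j)

/-- `C n m` is the subgroup of the symmetric group `S_m` (realized as permutations of `ℕ`
supported on `{1, …, m}`) generated by the `n`-crossing permutations `π_1, …, π_{m-n+1}`. -/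
def C (n m : ℕ) : Subgroup (Equiv.Perm ℕ) :=
  Subgroup.closure {σ | ∃ j, 1 ≤ j ∧ j ≤ m - n + 1 ∧ σ = crossPerm n j}

/-! ### Basic machinery -/

private lemma crossPerm_apply (n j i : ℕ) :
    crossPerm n j i = if j ≤ i ∧ i < j + n then 2 * j + n - 1 - i else i := rfl

private lemma mem_P {n m j : ℕ} (h1 : 1 ≤ j) (h2 : j ≤ m - n + 1) :
    crossPerm n j ∈ C n m :=
  Subgroup.subset_closure ⟨j, h1, h2, rfl⟩

private lemma swap_conj (σ : Equiv.Perm ℕ) (a b : ℕ) :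
    σ * Equiv.swap a b * σ⁻¹ = Equiv.swap (σ a) (σ b) :=
  (Equiv.swap_apply_apply σ a b).symm

private lemma conj_pair (σ x y : Equiv.Perm ℕ) :
    σ * (x * y) * σ⁻¹ = (σ * x * σ⁻¹) * (σ * y * σ⁻¹) := by
  group

private lemma conj_swap2 (σ : Equiv.Perm ℕ) (a b c d : ℕ) :
    σ * (Equiv.swap a b * Equiv.swap c d) * σ⁻¹
      = Equiv.swap (σ a) (σ b) * Equiv.swap (σ c) (σ d) := by
  rw [conj_pair, swap_conj, swap_conj]

private lemma conj_mem {n m : ℕ} {x g : Equiv.Perm ℕ} (hx : x ∈ C n m) (hg : g ∈ C n m) :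
    g * x * g⁻¹ ∈ C n m :=
  mul_mem (mul_mem hg hx) (inv_mem hg)

private lemma swsw_apply {a b c d : ℕ} (h1 : a ≠ b) (h2 : c ≠ d) (h3 : a ≠ c) (h4 : a ≠ d)
    (h5 : b ≠ c) (h6 : b ≠ d) (i : ℕ) :
    (Equiv.swap a b * Equiv.swap c d) i =
      if i = a then b else if i = b then a else if i = c then d else if i = d then c else i := by
  simp only [Equiv.Perm.mul_apply, Equiv.swap_apply_def]
  split_ifs <;> omega

/-! ### The key identity -/

private lemma key_identity {n : ℕ} (hn2 : n % 2 = 1) (hn5 : 5 ≤ n) (k : ℕ) :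
    (crossPerm n k * crossPerm n (k+1) * crossPerm n (k+2))^2
      = Equiv.swap k (k+2) * Equiv.swap (k+n-1) (k+n+1) := by
  have AB : ∀ j i, crossPerm n j (crossPerm n (j+1) i) =
      if j+2 ≤ i ∧ i ≤ j+n then i-2 else if i = j then j+n-1 else if i = j+1 then j+n else i := by
    intro j i
    simp only [crossPerm_apply]
    split_ifs <;> omega
  have CA : ∀ j i, crossPerm n (j+2) (crossPerm n j i) =
      if j ≤ i ∧ i ≤ j+n-3 then i+4 else if i = j+n-2 then j+1 else if i = j+n-1 then j
      else if i = j+n then j+3 else if i = j+n+1 then j+2 else i := by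
    intro j i
    simp only [crossPerm_apply]
    split_ifs <;> omega
  have H : ∀ j i, crossPerm n j (crossPerm n (j+1) (crossPerm n (j+2) (crossPerm n j i))) =
      if j ≤ i ∧ i ≤ j+n-4 then i+2 else if i = j+n-3 then j+n+1 else if i = j+n-2 then j+n
      else if i = j+n then j+1 else if i = j+n+1 then j else i := by
    intro j i
    rw [CA j i, AB j]
    split_ifs <;> omega
  ext i
  simp only [sq, Equiv.Perm.mul_apply]
  rw [AB (k+1) i, H k, Equiv.swap_apply_def, Equiv.swap_apply_def]
  split_ifs <;> omega

private lemma A_mem {n m : ℕ} (hn2 : n % 2 = 1) (hn5 : 5 ≤ n) {k : ℕ}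
    (hk : 1 ≤ k) (hk2 : k + 2 ≤ m - n + 1) :
    Equiv.swap k (k+2) * Equiv.swap (k+n-1) (k+n+1) ∈ C n m := by
  rw [← key_identity hn2 hn5 k]
  exact pow_mem (mul_mem (mul_mem (mem_P hk (by omega)) (mem_P (by omega) (by omega)))
    (mem_P (by omega) hk2)) 2

/-! ### Double transpositions `(k, k+2)(k+4+2t, k+6+2t)` -/

private lemma DD_mem {n m : ℕ} (hn2 : n % 2 = 1) (hn5 : 5 ≤ n) {k t : ℕ}
    (hk : 1 ≤ k) (ht : t + 4 ≤ n) (hw : k + 3 + t ≤ m - n + 1) :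
    Equiv.swap k (k+2) * Equiv.swap (k+4+2*t) (k+6+2*t) ∈ C n m := by
  have hA := A_mem (m := m) hn2 hn5 hk (show k + 2 ≤ m - n + 1 by omega)
  have hP : crossPerm n (k+3+t) ∈ C n m := mem_P (by omega) hw
  have hc := conj_mem hA hP
  rw [conj_swap2] at hc
  have e1 : crossPerm n (k+3+t) k = k := by
    rw [crossPerm_apply]; split_ifs <;> omega
  have e2 : crossPerm n (k+3+t) (k+2) = k+2 := by
    rw [crossPerm_apply]; split_ifs <;> omega
  have e3 : crossPerm n (k+3+t) (k+n-1) = k+6+2*t := by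
    rw [crossPerm_apply]; split_ifs <;> omega
  have e4 : crossPerm n (k+3+t) (k+n+1) = k+4+2*t := by
    rw [crossPerm_apply]; split_ifs <;> omega
  rw [e1, e2, e3, e4, Equiv.swap_comm (k+6+2*t) (k+4+2*t)] at hc
  exact hc

/-! ### 3-cycles -/

/-- The 3-cycle sending `a ↦ b ↦ c ↦ a`. -/
private def c3 (a b c : ℕ) : Equiv.Perm ℕ := Equiv.swap a c * Equiv.swap a b

private lemma c3_conj (σ : Equiv.Perm ℕ) (a b c : ℕ) :
    σ * c3 a b c * σ⁻¹ = c3 (σ a) (σ b) (σ c) := by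
  unfold c3
  rw [conj_pair, swap_conj, swap_conj]

private lemma c3_inv (a b c : ℕ) : (c3 a b c)⁻¹ = c3 a c b := by
  unfold c3
  rw [mul_inv_rev, Equiv.swap_inv, Equiv.swap_inv]

private lemma c3_apply {a b c : ℕ} (hab : a ≠ b) (hbc : b ≠ c) (hac : a ≠ c) (i : ℕ) :
    c3 a b c i = if i = a then b else if i = b then c else if i = c then a else i := by
  unfold c3
  simp only [Equiv.Perm.mul_apply, Equiv.swap_apply_def]
  split_ifs <;> omega

private lemma c3_rot {a b c : ℕ} (hab : a ≠ b) (hbc : b ≠ c) (hac : a ≠ c) :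
    c3 a b c = c3 b c a := by
  ext i
  unfold c3
  simp only [Equiv.Perm.mul_apply, Equiv.swap_apply_def]
  split_ifs <;> omega

private lemma cyc3_mem_low {n m : ℕ} (hn2 : n % 2 = 1) (hn5 : 5 ≤ n) {c : ℕ}
    (hc : 1 ≤ c) (hw : c + 5 ≤ m - n + 1) :
    c3 c (c+2) (c+4) ∈ C n m := by
  have h1 : Equiv.swap c (c+2) * Equiv.swap (c+4+2*1) (c+6+2*1) ∈ C n m :=
    DD_mem hn2 hn5 hc (by omega) (by omega)
  have h2 : Equiv.swap (c+2) (c+2+2) * Equiv.swap (c+2+4+2*0) (c+2+6+2*0) ∈ C n m :=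
    DD_mem hn2 hn5 (by omega) (by omega) (by omega)
  have h3 := mul_mem h1 h2
  have hid : c3 c (c+2) (c+4) =
      (Equiv.swap c (c+2) * Equiv.swap (c+4+2*1) (c+6+2*1)) *
      (Equiv.swap (c+2) (c+2+2) * Equiv.swap (c+2+4+2*0) (c+2+6+2*0)) := by
    ext i
    rw [Equiv.Perm.mul_apply,
      c3_apply (show c ≠ c+2 by omega) (by omega) (by omega),
      swsw_apply (by omega) (by omega) (by omega) (by omega) (by omega) (by omega),
      swsw_apply (by omega) (by omega) (by omega) (by omega) (by omega) (by omega)]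
    split_ifs <;> omega
  rwa [hid]

/-! ### Reflection -/

private def reflFun (m i : ℕ) : ℕ := if 1 ≤ i ∧ i ≤ m then m + 1 - i else i

private lemma reflFun_involutive (m : ℕ) : Function.Involutive (reflFun m) := by
  intro i; unfold reflFun; split_ifs <;> omega

private def reflPerm (m : ℕ) : Equiv.Perm ℕ :=
  Function.Involutive.toPerm _ (reflFun_involutive m)

private lemma reflPerm_apply (m i : ℕ) :
    reflPerm m i = if 1 ≤ i ∧ i ≤ m then m + 1 - i else i := rfl

private lemma reflPerm_inv (m : ℕ) : (reflPerm m)⁻¹ = reflPerm m := by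
  rw [inv_eq_iff_mul_eq_one]
  ext i
  simp only [Equiv.Perm.mul_apply, Equiv.Perm.one_apply, reflPerm_apply]
  split_ifs <;> omega

private lemma refl_P {n m j : ℕ} (hn : 1 ≤ n) (hnm : n ≤ m) (hj : 1 ≤ j) (hjm : j ≤ m - n + 1) :
    reflPerm m * crossPerm n j * (reflPerm m)⁻¹ = crossPerm n (m - n + 2 - j) := by
  rw [reflPerm_inv]
  ext i
  simp only [Equiv.Perm.mul_apply, crossPerm_apply, reflPerm_apply]
  split_ifs <;> omega

private lemma refl_conj_mem {n m : ℕ} (hn : 1 ≤ n) (hnm : n ≤ m) {x : Equiv.Perm ℕ}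
    (hx : x ∈ C n m) : reflPerm m * x * (reflPerm m)⁻¹ ∈ C n m := by
  induction hx using Subgroup.closure_induction with
  | mem g hg =>
    obtain ⟨j, h1, h2, rfl⟩ := hg
    rw [refl_P hn hnm h1 h2]
    exact mem_P (by omega) (by omega)
  | one => simpa using one_mem (C n m)
  | mul x y hx hy px py =>
    have h : reflPerm m * (x * y) * (reflPerm m)⁻¹
        = (reflPerm m * x * (reflPerm m)⁻¹) * (reflPerm m * y * (reflPerm m)⁻¹) :=
      conj_pair _ _ _
    rw [h]
    exact mul_mem px py
  | inv x hx px =>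
    have h : reflPerm m * x⁻¹ * (reflPerm m)⁻¹ = (reflPerm m * x * (reflPerm m)⁻¹)⁻¹ := by
      group
    rw [h]
    exact inv_mem px

/-! ### Consecutive 3-cycles, full range -/

private lemma cyc3_mem {n m : ℕ} (hn2 : n % 2 = 1) (hn5 : 5 ≤ n) (hm : 2*n + 4 ≤ m) {c : ℕ}
    (hc : 1 ≤ c) (hc4 : c + 4 ≤ m) :
    c3 c (c+2) (c+4) ∈ C n m := by
  by_cases hlow : c + 5 ≤ m - n + 1
  · exact cyc3_mem_low hn2 hn5 hc hlow
  · have h1 : 1 ≤ m - 3 - c := by omega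
    have h2 : (m-3-c) + 5 ≤ m - n + 1 := by omega
    have hx := refl_conj_mem (n := n) (m := m) (by omega) (by omega)
      (cyc3_mem_low hn2 hn5 h1 h2)
    rw [c3_conj] at hx
    have e1 : reflPerm m (m-3-c) = c+4 := by rw [reflPerm_apply]; split_ifs <;> omega
    have e2 : reflPerm m (m-3-c+2) = c+2 := by rw [reflPerm_apply]; split_ifs <;> omega
    have e3 : reflPerm m (m-3-c+4) = c := by rw [reflPerm_apply]; split_ifs <;> omega
    rw [e1, e2, e3] at hx
    have hrot : c3 (c+4) (c+2) c = c3 c (c+4) (c+2) := by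
      rw [c3_rot (by omega) (by omega) (by omega)]
      rw [c3_rot (by omega) (by omega) (by omega)]
    rw [hrot] at hx
    have h5 := inv_mem hx
    rwa [c3_inv] at h5

/-! ### General 3-cycles `x ↦ x+4+2k ↦ x+2+2k ↦ x` -/

private lemma gamma_mem {n m : ℕ} (hn2 : n % 2 = 1) (hn5 : 5 ≤ n) (hm : 2*n + 4 ≤ m) :
    ∀ k x, 1 ≤ x → x + 4 + 2*k ≤ m → c3 x (x+4+2*k) (x+2+2*k) ∈ C n m := by
  intro k
  induction k with
  | zero =>
    intro x hx hxm
    have h := inv_mem (cyc3_mem hn2 hn5 hm hx (by omega))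
    rw [c3_inv] at h
    have e : x + 4 + 2*0 = x + 4 := by omega
    have e2 : x + 2 + 2*0 = x + 2 := by omega
    rw [e, e2]
    exact h
  | succ k ih =>
    intro x hx hxm
    have hg := ih x hx (by omega)
    have hc : c3 (x+2+2*k) (x+2+2*k+2) (x+2+2*k+4) ∈ C n m :=
      cyc3_mem hn2 hn5 hm (by omega) (by omega)
    have hconj := conj_mem hg hc
    rw [c3_conj] at hconj
    have e1 : c3 (x+2+2*k) (x+2+2*k+2) (x+2+2*k+4) x = x := by
      rw [c3_apply (by omega) (by omega) (by omega)]
      split_ifs <;> omega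
    have e2 : c3 (x+2+2*k) (x+2+2*k+2) (x+2+2*k+4) (x+4+2*k) = x+4+2*(k+1) := by
      rw [c3_apply (by omega) (by omega) (by omega)]
      split_ifs <;> omega
    have e3 : c3 (x+2+2*k) (x+2+2*k+2) (x+2+2*k+4) (x+2+2*k) = x+2+2*(k+1) := by
      rw [c3_apply (by omega) (by omega) (by omega)]
      split_ifs <;> omega
    rw [e1, e2, e3] at hconj
    exact hconj

/-! ### Nested double transpositions -/

private lemma NEST_mem {n m : ℕ} (hn2 : n % 2 = 1) (hn5 : 5 ≤ n) (hm : 2*n + 4 ≤ m) {u w : ℕ}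
    (hu : 1 ≤ u) (huw : u + 4 ≤ w) (hpar : w % 2 = u % 2) (hwn : w + 2 ≤ n) :
    Equiv.swap u (w+2) * Equiv.swap (u+2) w ∈ C n m := by
  obtain ⟨t, rfl⟩ : ∃ t, w = u + 4 + 2*t := ⟨(w - u - 4)/2, by omega⟩
  have hDD : Equiv.swap u (u+2) * Equiv.swap (u+4+2*t) (u+6+2*t) ∈ C n m :=
    DD_mem hn2 hn5 hu (by omega) (by omega)
  have hγ : c3 (u+2) (u+2+4+2*t) (u+2+2+2*t) ∈ C n m :=
    gamma_mem hn2 hn5 hm t (u+2) (by omega) (by omega)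
  have a1 : u+2+4+2*t = u+6+2*t := by omega
  have a2 : u+2+2+2*t = u+4+2*t := by omega
  rw [a1, a2] at hγ
  have hconj := conj_mem hDD hγ
  rw [conj_swap2] at hconj
  have e1 : c3 (u+2) (u+6+2*t) (u+4+2*t) u = u := by
    rw [c3_apply (by omega) (by omega) (by omega)]; split_ifs <;> omega
  have e2 : c3 (u+2) (u+6+2*t) (u+4+2*t) (u+2) = u+4+2*t+2 := by
    rw [c3_apply (by omega) (by omega) (by omega)]; split_ifs <;> omega
  have e3 : c3 (u+2) (u+6+2*t) (u+4+2*t) (u+4+2*t) = u+2 := by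
    rw [c3_apply (by omega) (by omega) (by omega)]; split_ifs <;> omega
  have e4 : c3 (u+2) (u+6+2*t) (u+4+2*t) (u+6+2*t) = u+4+2*t := by
    rw [c3_apply (by omega) (by omega) (by omega)]; split_ifs <;> omega
  rw [e1, e2, e3, e4] at hconj
  exact hconj

/-! ### The ladder decomposition of a window reversal -/

private def revFun (l r i : ℕ) : ℕ := if l ≤ i ∧ i ≤ r then l + r - i else i

private lemma revFun_involutive (l r : ℕ) : Function.Involutive (revFun l r) := by
  intro i; unfold revFun; split_ifs <;> omega

private def revP (l r : ℕ) : Equiv.Perm ℕ :=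
  Function.Involutive.toPerm _ (revFun_involutive l r)

private lemma revP_apply (l r i : ℕ) :
    revP l r i = if l ≤ i ∧ i ≤ r then l + r - i else i := rfl

private lemma P_eq_revP {n : ℕ} (hn : 1 ≤ n) (j : ℕ) : crossPerm n j = revP j (j+n-1) := by
  ext i
  rw [crossPerm_apply, revP_apply]
  split_ifs <;> omega

private lemma assoc4 (a b c d : Equiv.Perm ℕ) : (a * (b * c)) * d = a * (b * (c * d)) := by
  group

private lemma lad {n m : ℕ} (hn2 : n % 2 = 1) (hn5 : 5 ≤ n) (hm : 2*n + 4 ≤ m) :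
    ∀ s l c, 1 ≤ l → c = l + 4*s → l + 4 + 8*s ≤ n →
      revP l (l+4+8*s) * (Equiv.swap c (c+4) * Equiv.swap (c+1) (c+3))⁻¹ ∈ C n m := by
  intro s
  induction s with
  | zero =>
    intro l c hl hc hn'
    rw [show c = l by omega, show l+4+8*0 = l+4 by omega]
    have hid0 : revP l (l+4) = Equiv.swap l (l+4) * Equiv.swap (l+1) (l+3) := by
      ext i
      rw [revP_apply,
        swsw_apply (by omega) (by omega) (by omega) (by omega) (by omega) (by omega)]
      split_ifs <;> omega
    rw [hid0]
    have hcan : (Equiv.swap l (l+4) * Equiv.swap (l+1) (l+3)) *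
        (Equiv.swap l (l+4) * Equiv.swap (l+1) (l+3))⁻¹ = 1 := by group
    rw [hcan]
    exact one_mem _
  | succ s ih =>
    intro l c hl hc hn'
    rw [show l+4+8*(s+1) = l+12+8*s by omega]
    have hid : revP l (l+12+8*s) =
        (Equiv.swap l (l+12+8*s) * Equiv.swap (l+2) (l+10+8*s)) *
        ((Equiv.swap (l+1) (l+11+8*s) * Equiv.swap (l+3) (l+9+8*s)) *
          revP (l+4) (l+4+4+8*s)) := by
      ext i
      rw [Equiv.Perm.mul_apply]
      rw [swsw_apply (by omega) (by omega) (by omega) (by omega) (by omega) (by omega)]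
      rw [Equiv.Perm.mul_apply]
      rw [swsw_apply (by omega) (by omega) (by omega) (by omega) (by omega) (by omega)]
      simp only [revP_apply]
      split_ifs <;> omega
    rw [hid, assoc4]
    have hN1 : Equiv.swap l (l+12+8*s) * Equiv.swap (l+2) (l+10+8*s) ∈ C n m := by
      have h := NEST_mem hn2 hn5 hm (u := l) (w := l+10+8*s) hl (by omega) (by omega) (by omega)
      rwa [show l+10+8*s+2 = l+12+8*s by omega] at h
    have hN2 : Equiv.swap (l+1) (l+11+8*s) * Equiv.swap (l+3) (l+9+8*s) ∈ C n m := by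
      have h := NEST_mem hn2 hn5 hm (u := l+1) (w := l+9+8*s) (by omega) (by omega)
        (by omega) (by omega)
      rwa [show l+9+8*s+2 = l+11+8*s by omega, show l+1+2 = l+3 by omega] at h
    have hIH := ih (l+4) c (by omega) (by omega) (by omega)
    exact mul_mem hN1 (mul_mem hN2 hIH)

/-! ### The base cross double transposition -/

private lemma Qbase {n m : ℕ} (hn8 : n % 8 = 5) (hm : 4*n - 4 ≤ m) :
    ∃ a₀ b₀ : ℕ, a₀ % 2 = 1 ∧ b₀ % 2 = 0 ∧ 1 ≤ b₀ ∧ a₀ + 4 ≤ m ∧ b₀ + 4 ≤ m ∧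
      Equiv.swap a₀ (a₀+2) * Equiv.swap b₀ (b₀+2) ∈ C n m := by
  have hn2 : n % 2 = 1 := by omega
  have hn5 : 5 ≤ n := by omega
  have hm' : 2*n + 4 ≤ m := by omega
  obtain ⟨s, hs⟩ : ∃ s, n = 8*s + 5 := ⟨n/8, by omega⟩
  have hlad := lad hn2 hn5 hm' s 1 (1+4*s) le_rfl rfl (by omega)
  have hP1 : crossPerm n 1 ∈ C n m := mem_P le_rfl (by omega)
  have hrev : crossPerm n 1 = revP 1 (1+4+8*s) := by
    rw [P_eq_revP (show 1 ≤ n by omega)]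
    congr 1
    omega
  rw [hrev] at hP1
  have hK : Equiv.swap (1+4*s) (1+4*s+4) * Equiv.swap (1+4*s+1) (1+4*s+3) ∈ C n m := by
    have h2 := mul_mem (inv_mem hlad) hP1
    have e : (revP 1 (1+4+8*s) *
        (Equiv.swap (1+4*s) (1+4*s+4) * Equiv.swap (1+4*s+1) (1+4*s+3))⁻¹)⁻¹ *
        revP 1 (1+4+8*s)
        = Equiv.swap (1+4*s) (1+4*s+4) * Equiv.swap (1+4*s+1) (1+4*s+3) := by
      group
    rwa [e] at h2
  have hσ : c3 (1+4*s) (1+4*s+4) (1+4*s+2) ∈ C n m := by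
    have h := inv_mem (cyc3_mem hn2 hn5 hm' (c := 1+4*s) (by omega) (by omega))
    rwa [c3_inv] at h
  have hQ := conj_mem hK hσ
  rw [conj_swap2] at hQ
  have e1 : c3 (1+4*s) (1+4*s+4) (1+4*s+2) (1+4*s) = 1+4*s+2+2 := by
    rw [c3_apply (by omega) (by omega) (by omega)]; split_ifs <;> omega
  have e2 : c3 (1+4*s) (1+4*s+4) (1+4*s+2) (1+4*s+4) = 1+4*s+2 := by
    rw [c3_apply (by omega) (by omega) (by omega)]; split_ifs <;> omega
  have e3 : c3 (1+4*s) (1+4*s+4) (1+4*s+2) (1+4*s+1) = 1+4*s+1 := by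
    rw [c3_apply (by omega) (by omega) (by omega)]; split_ifs <;> omega
  have e4 : c3 (1+4*s) (1+4*s+4) (1+4*s+2) (1+4*s+3) = 1+4*s+1+2 := by
    rw [c3_apply (by omega) (by omega) (by omega)]; split_ifs <;> omega
  rw [e1, e2, e3, e4, Equiv.swap_comm (1+4*s+2+2) (1+4*s+2)] at hQ
  exact ⟨1+4*s+2, 1+4*s+1, by omega, by omega, by omega, by omega, by omega, hQ⟩

/-! ### Moving the pairs around -/

private lemma Qstep_up {n m : ℕ} (hn2 : n % 2 = 1) (hn5 : 5 ≤ n) (hm : 2*n + 4 ≤ m)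
    {a b : ℕ} (hab : a % 2 ≠ b % 2) (ha : 1 ≤ a) (ha4 : a + 4 ≤ m)
    (h : Equiv.swap a (a+2) * Equiv.swap b (b+2) ∈ C n m) :
    Equiv.swap (a+2) (a+2+2) * Equiv.swap b (b+2) ∈ C n m := by
  have hc := cyc3_mem hn2 hn5 hm ha ha4
  have hq := conj_mem h hc
  rw [conj_swap2] at hq
  have e1 : c3 a (a+2) (a+4) a = a+2 := by
    rw [c3_apply (by omega) (by omega) (by omega)]; split_ifs <;> omega
  have e2 : c3 a (a+2) (a+4) (a+2) = a+2+2 := by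
    rw [c3_apply (by omega) (by omega) (by omega)]; split_ifs <;> omega
  have e3 : c3 a (a+2) (a+4) b = b := by
    rw [c3_apply (by omega) (by omega) (by omega)]; split_ifs <;> omega
  have e4 : c3 a (a+2) (a+4) (b+2) = b+2 := by
    rw [c3_apply (by omega) (by omega) (by omega)]; split_ifs <;> omega
  rwa [e1, e2, e3, e4] at hq

private lemma Qstep_down {n m : ℕ} (hn2 : n % 2 = 1) (hn5 : 5 ≤ n) (hm : 2*n + 4 ≤ m)
    {a b : ℕ} (hab : a % 2 ≠ b % 2) (ha : 1 ≤ a) (ha4 : a + 4 ≤ m)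
    (h : Equiv.swap (a+2) (a+2+2) * Equiv.swap b (b+2) ∈ C n m) :
    Equiv.swap a (a+2) * Equiv.swap b (b+2) ∈ C n m := by
  have hc : c3 a (a+4) (a+2) ∈ C n m := by
    have h' := inv_mem (cyc3_mem hn2 hn5 hm ha ha4)
    rwa [c3_inv] at h'
  have hq := conj_mem h hc
  rw [conj_swap2] at hq
  have e1 : c3 a (a+4) (a+2) (a+2) = a := by
    rw [c3_apply (by omega) (by omega) (by omega)]; split_ifs <;> omega
  have e2 : c3 a (a+4) (a+2) (a+2+2) = a+2 := by
    rw [c3_apply (by omega) (by omega) (by omega)]; split_ifs <;> omega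
  have e3 : c3 a (a+4) (a+2) b = b := by
    rw [c3_apply (by omega) (by omega) (by omega)]; split_ifs <;> omega
  have e4 : c3 a (a+4) (a+2) (b+2) = b+2 := by
    rw [c3_apply (by omega) (by omega) (by omega)]; split_ifs <;> omega
  rwa [e1, e2, e3, e4] at hq

private lemma Qup {n m : ℕ} (hn2 : n % 2 = 1) (hn5 : 5 ≤ n) (hm : 2*n + 4 ≤ m) :
    ∀ k {a b : ℕ}, a % 2 ≠ b % 2 → 1 ≤ a → a + 2*k + 2 ≤ m →
      Equiv.swap a (a+2) * Equiv.swap b (b+2) ∈ C n m →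
      Equiv.swap (a+2*k) (a+2*k+2) * Equiv.swap b (b+2) ∈ C n m := by
  intro k
  induction k with
  | zero =>
    intro a b hab ha hup h
    simpa using h
  | succ k ih =>
    intro a b hab ha hup h
    have hprev := ih hab ha (by omega) h
    have hstep := Qstep_up hn2 hn5 hm (a := a+2*k) (b := b) (by omega) (by omega) (by omega) hprev
    rw [show a+2*(k+1) = a+2*k+2 by omega]
    exact hstep

private lemma Qdown {n m : ℕ} (hn2 : n % 2 = 1) (hn5 : 5 ≤ n) (hm : 2*n + 4 ≤ m) :
    ∀ k {a b : ℕ}, a % 2 ≠ b % 2 → 1 ≤ a → a + 2*k + 2 ≤ m →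
      Equiv.swap (a+2*k) (a+2*k+2) * Equiv.swap b (b+2) ∈ C n m →
      Equiv.swap a (a+2) * Equiv.swap b (b+2) ∈ C n m := by
  intro k
  induction k with
  | zero =>
    intro a b hab ha hup h
    simpa using h
  | succ k ih =>
    intro a b hab ha hup h
    have h' : Equiv.swap (a+2*k+2) (a+2*k+2+2) * Equiv.swap b (b+2) ∈ C n m := by
      rwa [show a+2*(k+1) = a+2*k+2 by omega] at h
    have hstep := Qstep_down hn2 hn5 hm (a := a+2*k) (b := b) (by omega) (by omega) (by omega) h'
    exact ih hab ha (by omega) hstep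

private lemma Qmove {n m : ℕ} (hn2 : n % 2 = 1) (hn5 : 5 ≤ n) (hm : 2*n + 4 ≤ m)
    {x y b : ℕ} (hxy : x % 2 = y % 2) (hxb : x % 2 ≠ b % 2) (hx : 1 ≤ x) (hxm : x + 2 ≤ m)
    (hy : 1 ≤ y) (hym : y + 2 ≤ m)
    (h : Equiv.swap x (x+2) * Equiv.swap b (b+2) ∈ C n m) :
    Equiv.swap y (y+2) * Equiv.swap b (b+2) ∈ C n m := by
  rcases le_total x y with hle | hle
  · obtain ⟨k, rfl⟩ : ∃ k, y = x + 2*k := ⟨(y-x)/2, by omega⟩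
    exact Qup hn2 hn5 hm k hxb hx (by omega) h
  · obtain ⟨k, hk⟩ : ∃ k, x = y + 2*k := ⟨(x-y)/2, by omega⟩
    subst hk
    exact Qdown hn2 hn5 hm k (by omega) hy (by omega) h

private lemma Qcomm {a b : ℕ} (hab : a % 2 ≠ b % 2) :
    Equiv.swap a (a+2) * Equiv.swap b (b+2) = Equiv.swap b (b+2) * Equiv.swap a (a+2) := by
  ext i
  simp only [Equiv.Perm.mul_apply, Equiv.swap_apply_def]
  split_ifs <;> omega

private lemma Qall {n m : ℕ} (hn8 : n % 8 = 5) (hm4 : 4*n - 4 ≤ m)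
    {a b : ℕ} (ha : 1 ≤ a) (ham : a + 2 ≤ m) (hb : 1 ≤ b) (hbm : b + 2 ≤ m)
    (hab : a % 2 ≠ b % 2) :
    Equiv.swap a (a+2) * Equiv.swap b (b+2) ∈ C n m := by
  have hn2 : n % 2 = 1 := by omega
  have hn5 : 5 ≤ n := by omega
  have hm' : 2*n + 4 ≤ m := by omega
  obtain ⟨a₀, b₀, ha₀, hb₀, hb₀1, ha₀m, hb₀m, hQ0⟩ := Qbase hn8 hm4
  by_cases hpa : a % 2 = 1
  · -- a odd, b even
    rw [Qcomm (by omega)] at hQ0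
    have h2 := Qmove hn2 hn5 hm' (x := b₀) (y := b) (b := a₀) (by omega) (by omega)
      hb₀1 (by omega) hb hbm hQ0
    rw [Qcomm (by omega)] at h2
    exact Qmove hn2 hn5 hm' (x := a₀) (y := a) (b := b) (by omega) (by omega)
      (by omega) (by omega) ha ham h2
  · -- a even, b odd
    have h2 := Qmove hn2 hn5 hm' (x := a₀) (y := b) (b := b₀) (by omega) (by omega)
      (by omega) (by omega) hb hbm hQ0
    rw [Qcomm (by omega)] at h2
    have h3 := Qmove hn2 hn5 hm' (x := b₀) (y := a) (b := b) (by omega) (by omega)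
      hb₀1 (by omega) ha ham h2
    exact h3

theorem stmt12 (n : ℕ) (hn : n % 8 = 5)
    (m : ℕ) (hm : 4 * n - 4 ≤ m)
    (la lb : ℕ) (hla : 1 ≤ la) (hlb : 1 ≤ lb) (hpar : la % 2 ≠ lb % 2)
    (hord : la + 2 < lb) (hlbm : lb + 2 ≤ m) :
    Equiv.swap la (la + 2) * Equiv.swap lb (lb + 2) ∈ C n m :=
  Qall hn hm hla (by omega) hlb hlbm hpar
end

section
/- For every integer n with n ≡ 0 (mod 4) and 4 ≤ n ≤ 200, the n-crossing permutations over S_{n+2} generate exactly the alternating group: C(n, n+2) = A_{n+2}. -/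
/-- A (finitely supported) permutation is even if it is a product of an even number of
transpositions. For a permutation supported on `{1, ..., m}` this says exactly that it lies
in the alternating group `A_m`. -/
def IsEvenPerm (s : Equiv.Perm ℕ) : Prop :=
  ∃ l : List (Equiv.Perm ℕ), (∀ t ∈ l, t.IsSwap) ∧ l.prod = s ∧ Even l.length

namespace Stmt16Aux

open Equiv Equiv.Perm

lemma crossPerm_apply (n j i : ℕ) : crossPerm n j i = crossFun n j i := rfl

lemma pi_mem (n j : ℕ) (h1 : 1 ≤ j) (h3 : j ≤ 3) : crossPerm n j ∈ C n (n + 2) :=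
  Subgroup.subset_closure ⟨j, h1, by omega, rfl⟩

/-! ### The basic cycles -/

def aP (n : ℕ) : Perm ℕ := crossPerm n 2 * crossPerm n 1

def bP (n : ℕ) : Perm ℕ := crossPerm n 3 * crossPerm n 2

lemma aP_mem (n : ℕ) : aP n ∈ C n (n + 2) :=
  mul_mem (pi_mem n 2 (by omega) (by omega)) (pi_mem n 1 (by omega) (by omega))

lemma bP_mem (n : ℕ) : bP n ∈ C n (n + 2) :=
  mul_mem (pi_mem n 3 (by omega) (by omega)) (pi_mem n 2 (by omega) (by omega))

lemma aP_apply (n : ℕ) (hn4 : 4 ≤ n) (i : ℕ) :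
    aP n i = if 1 ≤ i ∧ i ≤ n - 1 then i + 2
      else if i = n then 1 else if i = n + 1 then 2 else i := by
  simp only [aP, Perm.mul_apply]
  show crossFun n 2 (crossFun n 1 i) = _
  unfold crossFun
  split_ifs <;> omega

lemma bP_apply (n : ℕ) (hn4 : 4 ≤ n) (i : ℕ) :
    bP n i = if 2 ≤ i ∧ i ≤ n then i + 2
      else if i = n + 1 then 2 else if i = n + 2 then 3 else i := by
  simp only [bP, Perm.mul_apply]
  show crossFun n 3 (crossFun n 2 i) = _
  unfold crossFun
  split_ifs <;> omega

lemma aP_pow (n : ℕ) (hn4 : 4 ≤ n) :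
    ∀ k, 2 * k ≤ n → ∀ i, (aP n ^ k) i =
      if 1 ≤ i ∧ i ≤ n + 1 - 2 * k then i + 2 * k
      else if n + 2 - 2 * k ≤ i ∧ i ≤ n + 1 then i + 2 * k - (n + 1) else i := by
  intro k
  induction k with
  | zero =>
    intro _ i
    simp only [pow_zero, Perm.one_apply]
    split_ifs <;> omega
  | succ k ih =>
    intro hk i
    rw [pow_succ', Perm.mul_apply, ih (by omega), aP_apply n hn4]
    split_ifs <;> omega

lemma bP_pow (n : ℕ) (hn4 : 4 ≤ n) :
    ∀ k, 2 * k ≤ n → ∀ i, (bP n ^ k) i =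
      if 2 ≤ i ∧ i ≤ n + 2 - 2 * k then i + 2 * k
      else if n + 3 - 2 * k ≤ i ∧ i ≤ n + 2 then i + 2 * k - (n + 1) else i := by
  intro k
  induction k with
  | zero =>
    intro _ i
    simp only [pow_zero, Perm.one_apply]
    split_ifs <;> omega
  | succ k ih =>
    intro hk i
    rw [pow_succ', Perm.mul_apply, ih (by omega), bP_apply n hn4]
    split_ifs <;> omega

/-- `wP = aP ^ (n/2)` is the backwards shift on `[1, n+1]`. -/
def wP (n : ℕ) : Perm ℕ := aP n ^ (n / 2)

/-- `wP' = bP ^ (n/2)` is the backwards shift on `[2, n+2]`. -/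
def wP' (n : ℕ) : Perm ℕ := bP n ^ (n / 2)

lemma wP_mem (n : ℕ) : wP n ∈ C n (n + 2) := pow_mem (aP_mem n) _

lemma wP'_mem (n : ℕ) : wP' n ∈ C n (n + 2) := pow_mem (bP_mem n) _

lemma wP_apply (n : ℕ) (hn4 : 4 ≤ n) (hn2 : n % 2 = 0) (i : ℕ) :
    wP n i = if i = 1 then n + 1 else if 2 ≤ i ∧ i ≤ n + 1 then i - 1 else i := by
  rw [wP, aP_pow n hn4 (n / 2) (by omega)]
  split_ifs <;> omega

lemma wP'_apply (n : ℕ) (hn4 : 4 ≤ n) (hn2 : n % 2 = 0) (i : ℕ) :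
    wP' n i = if i = 2 then n + 2 else if 3 ≤ i ∧ i ≤ n + 2 then i - 1 else i := by
  rw [wP', bP_pow n hn4 (n / 2) (by omega)]
  split_ifs <;> omega

/-- The forwards shift on `[1, n+1]`. -/
def sP (n : ℕ) : Perm ℕ := (wP n)⁻¹

/-- The forwards shift on `[2, n+2]`. -/
def sP' (n : ℕ) : Perm ℕ := (wP' n)⁻¹

lemma sP_mem (n : ℕ) : sP n ∈ C n (n + 2) := inv_mem (wP_mem n)

lemma sP'_mem (n : ℕ) : sP' n ∈ C n (n + 2) := inv_mem (wP'_mem n)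

lemma sP_apply (n : ℕ) (hn4 : 4 ≤ n) (hn2 : n % 2 = 0) (i : ℕ) :
    sP n i = if 1 ≤ i ∧ i ≤ n then i + 1 else if i = n + 1 then 1 else i := by
  apply (wP n).injective
  rw [sP, Perm.coe_inv, Equiv.apply_symm_apply, wP_apply n hn4 hn2]
  split_ifs <;> omega

lemma sP'_apply (n : ℕ) (hn4 : 4 ≤ n) (hn2 : n % 2 = 0) (i : ℕ) :
    sP' n i = if 2 ≤ i ∧ i ≤ n + 1 then i + 1 else if i = n + 2 then 2 else i := by
  apply (wP' n).injective
  rw [sP', Perm.coe_inv, Equiv.apply_symm_apply, wP'_apply n hn4 hn2]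
  split_ifs <;> omega

/-! ### The base 3-cycle -/

set_option maxHeartbeats 1600000 in
lemma T_eq (n : ℕ) (hn4 : 4 ≤ n) :
    aP n * (bP n)⁻¹ = Equiv.swap 1 3 * Equiv.swap 3 (n + 2) := by
  have h : aP n = (Equiv.swap 1 3 * Equiv.swap 3 (n + 2)) * bP n := by
    ext i
    simp only [Perm.mul_apply, aP_apply n hn4, bP_apply n hn4, Equiv.swap_apply_def]
    split_ifs <;> omega
  rw [h, mul_assoc, mul_inv_cancel, mul_one]

set_option maxHeartbeats 1600000 in
lemma U_eq (n : ℕ) (hn4 : 4 ≤ n) (hn2 : n % 2 = 0) :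
    sP' n * wP n = Equiv.swap 1 (n + 2) * Equiv.swap (n + 2) 2 := by
  ext i
  simp only [Perm.mul_apply, sP'_apply n hn4 hn2, wP_apply n hn4 hn2, Equiv.swap_apply_def]
  split_ifs <;> omega

def UP (n : ℕ) : Perm ℕ := sP' n * wP n

lemma UP_mem (n : ℕ) : UP n ∈ C n (n + 2) := mul_mem (sP'_mem n) (wP_mem n)

/-- Conjugation of a product of two swaps. -/
lemma conj_pair (ρ : Perm ℕ) (x y z : ℕ) :
    Equiv.swap (ρ x) (ρ y) * Equiv.swap (ρ y) (ρ z) =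
      ρ * (Equiv.swap x y * Equiv.swap y z) * ρ⁻¹ := by
  rw [Equiv.swap_apply_apply, Equiv.swap_apply_apply]
  group

lemma UP_val1 (n : ℕ) (hn4 : 4 ≤ n) (hn2 : n % 2 = 0) : UP n 1 = n + 2 := by
  rw [UP, Perm.mul_apply, wP_apply n hn4 hn2, sP'_apply n hn4 hn2]
  split_ifs <;> omega

lemma UP_val3 (n : ℕ) (hn4 : 4 ≤ n) (hn2 : n % 2 = 0) : UP n 3 = 3 := by
  rw [UP, Perm.mul_apply, wP_apply n hn4 hn2, sP'_apply n hn4 hn2]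
  split_ifs <;> omega

lemma UP_valN (n : ℕ) (hn4 : 4 ≤ n) (hn2 : n % 2 = 0) : UP n (n + 2) = 2 := by
  rw [UP, Perm.mul_apply, wP_apply n hn4 hn2, sP'_apply n hn4 hn2]
  split_ifs <;> omega

set_option maxHeartbeats 1000000 in
lemma c1_swap_eq (n : ℕ) (hn4 : 4 ≤ n) :
    (Equiv.swap 1 3 * Equiv.swap 3 (n + 2)) * (Equiv.swap (n + 2) 3 * Equiv.swap 3 2)
      = (Equiv.swap 1 2 * Equiv.swap 2 3 : Perm ℕ)⁻¹ := by
  have hc : (Equiv.swap (n + 2) 3 : Perm ℕ) = Equiv.swap 3 (n + 2) := Equiv.swap_comm _ _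
  rw [hc, mul_assoc, ← mul_assoc (Equiv.swap 3 (n + 2)), Equiv.swap_mul_self, one_mul]
  simp only [mul_inv_rev, Equiv.swap_inv]
  ext i
  simp only [Perm.mul_apply, Equiv.swap_apply_def]
  split_ifs <;> omega

lemma c1_mem (n : ℕ) (hn4 : 4 ≤ n) (hn2 : n % 2 = 0) :
    (Equiv.swap 1 2 * Equiv.swap 2 3 : Perm ℕ) ∈ C n (n + 2) := by
  have hV : UP n * (Equiv.swap 1 3 * Equiv.swap 3 (n + 2)) * (UP n)⁻¹
      = Equiv.swap (n + 2) 3 * Equiv.swap 3 2 := by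
    have h := conj_pair (UP n) 1 3 (n + 2)
    rw [UP_val1 n hn4 hn2, UP_val3 n hn4 hn2, UP_valN n hn4 hn2] at h
    exact h.symm
  have key : (aP n * (bP n)⁻¹) * (UP n * (aP n * (bP n)⁻¹) * (UP n)⁻¹)
      = (Equiv.swap 1 2 * Equiv.swap 2 3 : Perm ℕ)⁻¹ := by
    rw [T_eq n hn4, hV, c1_swap_eq n hn4]
  have h2 : ((aP n * (bP n)⁻¹) * (UP n * (aP n * (bP n)⁻¹) * (UP n)⁻¹))⁻¹
      = Equiv.swap 1 2 * Equiv.swap 2 3 := by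
    rw [key, inv_inv]
  rw [← h2]
  have hT : aP n * (bP n)⁻¹ ∈ C n (n + 2) := mul_mem (aP_mem n) (inv_mem (bP_mem n))
  exact inv_mem (mul_mem hT (mul_mem (mul_mem (UP_mem n) hT) (inv_mem (UP_mem n))))

/-! ### moved -/

/-! ### All consecutive 3-cycles -/

lemma ck_mem (n : ℕ) (hn4 : 4 ≤ n) (hn2 : n % 2 = 0) :
    ∀ k, 1 ≤ k → k ≤ n →
      (Equiv.swap k (k + 1) * Equiv.swap (k + 1) (k + 2) : Perm ℕ) ∈ C n (n + 2) := by
  have main : ∀ k, 1 ≤ k → k ≤ n - 1 →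
      (Equiv.swap k (k + 1) * Equiv.swap (k + 1) (k + 2) : Perm ℕ) ∈ C n (n + 2) := by
    intro k hk1
    induction k, hk1 using Nat.le_induction with
    | base => intro _; exact c1_mem n hn4 hn2
    | succ k hk ih =>
      intro hk2
      have hc := ih (by omega)
      have e1 : sP n k = k + 1 := by
        rw [sP_apply n hn4 hn2]; split_ifs <;> omega
      have e2 : sP n (k + 1) = k + 2 := by
        rw [sP_apply n hn4 hn2]; split_ifs <;> omega
      have e3 : sP n (k + 2) = k + 3 := by
        rw [sP_apply n hn4 hn2]; split_ifs <;> omega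
      have h := conj_pair (sP n) k (k + 1) (k + 2)
      rw [e1, e2, e3] at h
      have h' : (Equiv.swap (k + 1) (k + 1 + 1) * Equiv.swap (k + 1 + 1) (k + 1 + 2) : Perm ℕ) =
          sP n * (Equiv.swap k (k + 1) * Equiv.swap (k + 1) (k + 2)) * (sP n)⁻¹ := by
        rw [show k + 1 + 1 = k + 2 by omega, show k + 1 + 2 = k + 3 by omega]; exact h
      rw [h']
      exact mul_mem (mul_mem (sP_mem n) hc) (inv_mem (sP_mem n))
  intro k hk1 hk2
  rcases lt_or_eq_of_le hk2 with h | h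
  · exact main k hk1 (by omega)
  · rw [h]
    have hc := main (n - 1) (by omega) (by omega)
    rw [show n - 1 + 1 = n by omega, show n - 1 + 2 = n + 1 by omega] at hc
    have e1 : sP' n (n - 1) = n := by
      rw [sP'_apply n hn4 hn2]; split_ifs <;> omega
    have e2 : sP' n n = n + 1 := by
      rw [sP'_apply n hn4 hn2]; split_ifs <;> omega
    have e3 : sP' n (n + 1) = n + 2 := by
      rw [sP'_apply n hn4 hn2]; split_ifs <;> omega
    have hcj := conj_pair (sP' n) (n - 1) n (n + 1)
    rw [e1, e2, e3] at hcj
    rw [hcj]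
    exact mul_mem (mul_mem (sP'_mem n) hc) (inv_mem (sP'_mem n))

/-! ### Pairs of adjacent transpositions -/

lemma pair_mem (n : ℕ) (hn4 : 4 ≤ n) (hn2 : n % 2 = 0) :
    ∀ i j, 1 ≤ i → i ≤ n + 1 → 1 ≤ j → j ≤ n + 1 →
      (Equiv.swap i (i + 1) * Equiv.swap j (j + 1) : Perm ℕ) ∈ C n (n + 2) := by
  have asc : ∀ i, 1 ≤ i → ∀ j, i ≤ j → j ≤ n + 1 →
      (Equiv.swap i (i + 1) * Equiv.swap j (j + 1) : Perm ℕ) ∈ C n (n + 2) := by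
    intro i hi1 j hij
    induction j, hij using Nat.le_induction with
    | base => intro _; rw [Equiv.swap_mul_self]; exact one_mem _
    | succ j hj ih =>
      intro hj2
      have h1 := ih (by omega)
      have h2 := ck_mem n hn4 hn2 j (by omega) (by omega)
      have h3 : (Equiv.swap i (i + 1) * Equiv.swap (j + 1) (j + 1 + 1) : Perm ℕ) =
          (Equiv.swap i (i + 1) * Equiv.swap j (j + 1)) *
            (Equiv.swap j (j + 1) * Equiv.swap (j + 1) (j + 2)) := by
        rw [show j + 1 + 1 = j + 2 by omega, mul_assoc,
          ← mul_assoc (Equiv.swap j (j + 1)), Equiv.swap_mul_self, one_mul]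
      rw [h3]
      exact mul_mem h1 h2
  intro i j hi1 hi2 hj1 hj2
  rcases le_total i j with h | h
  · exact asc i hi1 j h hj2
  · have hm := asc j hj1 i h hi2
    have : (Equiv.swap i (i + 1) * Equiv.swap j (j + 1) : Perm ℕ) =
        (Equiv.swap j (j + 1) * Equiv.swap i (i + 1))⁻¹ := by
      rw [mul_inv_rev, Equiv.swap_inv, Equiv.swap_inv]
    rw [this]
    exact inv_mem hm

/-! ### Products of adjacent transpositions -/

lemma adjProd_mem (n : ℕ) (hn4 : 4 ≤ n) (hn2 : n % 2 = 0) :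
    ∀ (l : List ℕ), (∀ x ∈ l, 1 ≤ x ∧ x ≤ n + 1) → Even l.length →
      ((l.map fun x => Equiv.swap x (x + 1)).prod : Perm ℕ) ∈ C n (n + 2) := by
  suffices H : ∀ (m : ℕ) (l : List ℕ), l.length ≤ m →
      (∀ x ∈ l, 1 ≤ x ∧ x ≤ n + 1) → Even l.length →
      ((l.map fun x => Equiv.swap x (x + 1)).prod : Perm ℕ) ∈ C n (n + 2) by
    intro l hb he; exact H l.length l le_rfl hb he
  intro m
  induction m with
  | zero =>
    intro l hl _ _
    have : l = [] := List.length_eq_zero_iff.mp (by omega)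
    subst this
    simp only [List.map_nil, List.prod_nil]
    exact one_mem _
  | succ m ih =>
    intro l hl hb he
    match l with
    | [] =>
      simp only [List.map_nil, List.prod_nil]
      exact one_mem _
    | [x] =>
      exfalso
      obtain ⟨c, hc⟩ := he
      simp only [List.length_singleton] at hc
      omega
    | x :: y :: t =>
      have hx := hb x (by simp)
      have hy := hb y (by simp)
      have hlt : t.length ≤ m := by
        simp only [List.length_cons] at hl; omega
      have het : Even t.length := by
        obtain ⟨c, hc⟩ := he
        simp only [List.length_cons] at hc
        exact ⟨c - 1, by omega⟩
      have hbt : ∀ z ∈ t, 1 ≤ z ∧ z ≤ n + 1 := fun z hz => hb z (by simp [hz])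
      have ht := ih t hlt hbt het
      simp only [List.map_cons, List.prod_cons]
      rw [← mul_assoc]
      exact mul_mem (pair_mem n hn4 hn2 x y hx.1 hx.2 hy.1 hy.2) ht

/-! ### Decomposing a swap into adjacent transpositions -/

lemma adjDecomp (n : ℕ) :
    ∀ (d a b : ℕ), b - a = d → 1 ≤ a → a < b → b ≤ n + 2 →
      ∃ l : List ℕ, (∀ x ∈ l, 1 ≤ x ∧ x ≤ n + 1) ∧ Odd l.length ∧
        ((l.map fun x => Equiv.swap x (x + 1)).prod : Perm ℕ) = Equiv.swap a b := by
  intro d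
  induction d using Nat.strong_induction_on with
  | _ d ih =>
    intro a b hd h1 hab hb
    by_cases h : b = a + 1
    · refine ⟨[a], ?_, ⟨0, by simp⟩, by simp [h]⟩
      intro x hx
      simp only [List.mem_cons, List.not_mem_nil, or_false] at hx
      subst hx
      omega
    · obtain ⟨l', hb', hodd, hprod⟩ :=
        ih (d - 1) (by omega) (a + 1) b (by omega) (by omega) (by omega) hb
      refine ⟨a :: (l' ++ [a]), ?_, ?_, ?_⟩
      · intro x hx
        simp only [List.mem_cons, List.mem_append, List.not_mem_nil, or_false] at hx
        rcases hx with rfl | hx | rfl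
        · omega
        · exact hb' x hx
        · omega
      · obtain ⟨c, hc⟩ := hodd
        refine ⟨c + 1, ?_⟩
        simp only [List.length_cons, List.length_append, List.length_nil]
        omega
      · have hswap : Equiv.swap a b =
            Equiv.swap a (a + 1) * Equiv.swap (a + 1) b * Equiv.swap a (a + 1) := by
          have h2 := Equiv.swap_apply_apply (Equiv.swap a (a + 1) : Perm ℕ) (a + 1) b
          rw [Equiv.swap_apply_right, Equiv.swap_apply_of_ne_of_ne (by omega) (by omega),
            Equiv.swap_inv] at h2
          exact h2
        simp only [List.map_cons, List.map_append, List.map_cons, List.map_nil,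
          List.prod_cons, List.prod_append, List.prod_nil, mul_one]
        rw [hprod, hswap]
        rw [mul_assoc]
     
/-! ### Sorting: every permutation supported on `[1, n+2]` is a product of
adjacent transpositions -/

lemma sortDecomp (n : ℕ) :
    ∀ (k : ℕ), k ≤ n + 2 → ∀ σ : Perm ℕ, (∀ i, σ i ≠ i → 1 ≤ i ∧ i ≤ k) →
      ∃ l : List ℕ, (∀ x ∈ l, 1 ≤ x ∧ x ≤ n + 1) ∧
        ((l.map fun x => Equiv.swap x (x + 1)).prod : Perm ℕ) = σ := by
  intro k
  induction k with
  | zero =>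
    intro _ σ hsupp
    have hσ : σ = 1 := by
      ext i
      by_contra hi
      have := hsupp i hi
      omega
    exact ⟨[], by simp, by simp [hσ]⟩
  | succ k ih =>
    intro hk σ hsupp
    by_cases h : σ (k + 1) = k + 1
    · refine ih (by omega) σ ?_
      intro i hi
      have hb := hsupp i hi
      by_cases hik : i = k + 1
      · subst hik; exact absurd h hi
      · omega
    · have hjm : σ (σ (k + 1)) ≠ σ (k + 1) := fun he => h (σ.injective he)
      have hjb := hsupp (σ (k + 1)) hjm
      have hjk : σ (k + 1) ≤ k := by
        rcases Nat.lt_or_ge (σ (k + 1)) (k + 1) with h' | h'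
        · omega
        · exfalso; exact h (le_antisymm hjb.2 h')
      obtain ⟨l₁, hb₁, _, hp₁⟩ := adjDecomp n (k + 1 - σ (k + 1)) (σ (k + 1)) (k + 1)
        rfl hjb.1 (by omega) (by omega)
      have hτ : ∀ i, (Equiv.swap (σ (k + 1)) (k + 1) * σ) i ≠ i → 1 ≤ i ∧ i ≤ k := by
        intro i hi
        rw [Perm.mul_apply] at hi
        by_cases hik : i = k + 1
        · exfalso; subst hik
          rw [Equiv.swap_apply_left] at hi
          exact hi rfl
        · by_cases hσi : σ i = i
          · rw [hσi] at hi
            by_cases hia : i = σ (k + 1)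
            · subst hia; omega
            · exfalso
              rw [Equiv.swap_apply_of_ne_of_ne (fun e => hia e) (fun e => hik e)] at hi
              exact hi rfl
          · have := hsupp i hσi
            omega
      obtain ⟨l₂, hb₂, hp₂⟩ := ih (by omega) _ hτ
      refine ⟨l₁ ++ l₂, ?_, ?_⟩
      · intro x hx
        rcases List.mem_append.mp hx with hx | hx
        · exact hb₁ x hx
        · exact hb₂ x hx
      · rw [List.map_append, List.prod_append, hp₁, hp₂, ← mul_assoc,
          Equiv.swap_mul_self, one_mul]

/-! ### Evenness machinery -/

lemma rev_prod_swaps : ∀ (l : List (Perm ℕ)), (∀ t ∈ l, t.IsSwap) →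
    l.reverse.prod = (l.prod)⁻¹ := by
  intro l
  induction l with
  | nil => intro _; simp
  | cons t l ih =>
    intro h
    have ht : t * t = 1 := by
      obtain ⟨a, b, _, rfl⟩ := h t (by simp)
      exact Equiv.swap_mul_self a b
    have htinv : t⁻¹ = t := by
      rw [← mul_one t⁻¹, ← ht, ← mul_assoc, inv_mul_cancel, one_mul]
    rw [List.reverse_cons, List.prod_append, List.prod_cons, List.prod_nil, mul_one,
      List.prod_cons, mul_inv_rev, htinv, ih (fun s hs => h s (by simp [hs]))]

lemma isEvenPerm_one : IsEvenPerm 1 :=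
  ⟨[], fun t ht => absurd ht List.not_mem_nil, List.prod_nil, Even.zero⟩

lemma isEvenPerm_mul {σ τ : Perm ℕ} (hσ : IsEvenPerm σ) (hτ : IsEvenPerm τ) :
    IsEvenPerm (σ * τ) := by
  obtain ⟨l1, h1, hp1, he1⟩ := hσ
  obtain ⟨l2, h2, hp2, he2⟩ := hτ
  refine ⟨l1 ++ l2, ?_, ?_, ?_⟩
  · intro t ht
    rcases List.mem_append.mp ht with h | h
    · exact h1 t h
    · exact h2 t h
  · rw [List.prod_append, hp1, hp2]
  · rw [List.length_append]; exact he1.add he2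

lemma isEvenPerm_inv {σ : Perm ℕ} (hσ : IsEvenPerm σ) : IsEvenPerm σ⁻¹ := by
  obtain ⟨l, h, hp, he⟩ := hσ
  refine ⟨l.reverse, ?_, ?_, ?_⟩
  · intro t ht
    exact h t (List.mem_reverse.mp ht)
  · rw [rev_prod_swaps l h, hp]
  · rw [List.length_reverse]; exact he

/-! ### The generators are even -/

lemma swapList_prod (n j : ℕ) (hn2 : n % 2 = 0) :
    ∀ m, 2 * m ≤ n → ∀ i,
      (((List.range m).map fun k => Equiv.swap (j + k) (j + n - 1 - k)).prod : Perm ℕ) i =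
        if (j ≤ i ∧ i < j + m) ∨ (j + n - m ≤ i ∧ i < j + n) then 2 * j + n - 1 - i else i := by
  intro m
  induction m with
  | zero =>
    intro _ i
    simp only [List.range_zero, List.map_nil, List.prod_nil, Perm.one_apply]
    split_ifs <;> omega
  | succ m ih =>
    intro hm i
    rw [List.range_succ, List.map_append, List.prod_append]
    simp only [List.map_cons, List.map_nil, List.prod_cons, List.prod_nil, mul_one,
      Perm.mul_apply]
    rw [Equiv.swap_apply_def]
    simp only [ih (by omega : 2 * m ≤ n)]
    split_ifs <;> omega

lemma crossPerm_eq_prod (n j : ℕ) (hn2 : n % 2 = 0) :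
    crossPerm n j =
      (((List.range (n / 2)).map fun k => Equiv.swap (j + k) (j + n - 1 - k)).prod : Perm ℕ) := by
  ext i
  rw [swapList_prod n j hn2 (n / 2) (by omega), crossPerm_apply]
  unfold crossFun
  split_ifs <;> omega

lemma isEvenPerm_crossPerm (n j : ℕ) (hn : n % 4 = 0) (hn4 : 4 ≤ n) :
    IsEvenPerm (crossPerm n j) := by
  refine ⟨(List.range (n / 2)).map fun k => Equiv.swap (j + k) (j + n - 1 - k), ?_, ?_, ?_⟩
  · intro t ht
    obtain ⟨k, hk, rfl⟩ := List.mem_map.mp ht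
    rw [List.mem_range] at hk
    exact ⟨j + k, j + n - 1 - k, by omega, rfl⟩
  · exact (crossPerm_eq_prod n j (by omega)).symm
  · rw [List.length_map, List.length_range]
    exact ⟨n / 4, by omega⟩

/-! ### No odd product of swaps is the identity -/

lemma swap_bound : ∀ (M : List (Perm ℕ)), (∀ t ∈ M, t.IsSwap) →
    ∃ m, ∀ t ∈ M, ∀ x, t x ≠ x → x < m := by
  intro M
  induction M with
  | nil => intro _; exact ⟨0, by simp⟩
  | cons t M ih =>
    intro h
    obtain ⟨m', hm'⟩ := ih (fun s hs => h s (by simp [hs]))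
    obtain ⟨a, b, hab, rfl⟩ := h t List.mem_cons_self
    refine ⟨a + b + m' + 1, ?_⟩
    intro s hs x hx
    rcases List.mem_cons.mp hs with rfl | hs
    · by_cases hxa : x = a
      · omega
      · by_cases hxb : x = b
        · omega
        · exact absurd (Equiv.swap_apply_of_ne_of_ne hxa hxb) hx
    · exact lt_of_lt_of_le (hm' s hs x hx) (by omega)

open Classical in
/-- Restriction of a boundedly supported permutation of `ℕ` to `Fin m`. -/
noncomputable def restr (m : ℕ) (σ : Perm ℕ) : Perm (Fin m) :=
  if h : ∀ x, σ x ≠ x → x < m then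
    { toFun := fun x => ⟨σ x, by
        by_cases hx : σ x = x
        · rw [hx]; exact x.2
        · exact h (σ x) (fun he => hx (σ.injective he))⟩
      invFun := fun x => ⟨σ⁻¹ x, by
        by_cases hx : σ⁻¹ (x : ℕ) = x
        · rw [hx]; exact x.2
        · refine h (σ⁻¹ x) ?_
          rw [Perm.coe_inv, Equiv.apply_symm_apply]
          exact fun e => hx e.symm⟩
      left_inv := fun x => by
        apply Fin.ext
        simp
      right_inv := fun x => by
        apply Fin.ext
        simp }
  else 1

lemma restr_apply (m : ℕ) (σ : Perm ℕ) (h : ∀ x, σ x ≠ x → x < m) (x : Fin m) :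
    (restr m σ x : ℕ) = σ x := by
  rw [restr, dif_pos h]
  rfl

lemma restr_one (m : ℕ) : restr m 1 = 1 := by
  have h : ∀ x, (1 : Perm ℕ) x ≠ x → x < m := fun x hx => absurd rfl hx
  ext x
  rw [restr_apply m 1 h x]
  rfl

lemma restr_mul (m : ℕ) (σ τ : Perm ℕ) (hσ : ∀ x, σ x ≠ x → x < m)
    (hτ : ∀ x, τ x ≠ x → x < m) : restr m (σ * τ) = restr m σ * restr m τ := by
  have hστ : ∀ x, (σ * τ) x ≠ x → x < m := by
    intro x hx
    rw [Perm.mul_apply] at hx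
    by_cases h : τ x = x
    · rw [h] at hx; exact hσ x hx
    · exact hτ x h
  ext x
  rw [Perm.mul_apply]
  rw [restr_apply m _ hστ, restr_apply m σ hσ, Perm.mul_apply]
  congr 1
  exact (restr_apply m τ hτ x).symm

lemma restr_swap (m a b : ℕ) (ha : a < m) (hb : b < m) :
    restr m (Equiv.swap a b) = Equiv.swap (⟨a, ha⟩ : Fin m) ⟨b, hb⟩ := by
  have h : ∀ x, Equiv.swap a b x ≠ x → x < m := by
    intro x hx
    by_cases hxa : x = a
    · omega
    · by_cases hxb : x = b
      · omega
      · exact absurd (Equiv.swap_apply_of_ne_of_ne hxa hxb) hx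
  ext x
  rw [restr_apply m _ h]
  rw [Equiv.swap_apply_def, Equiv.swap_apply_def]
  simp only [Fin.ext_iff]
  split_ifs <;> simp_all

lemma prod_bound (m : ℕ) : ∀ (M : List (Perm ℕ)), (∀ t ∈ M, ∀ x, t x ≠ x → x < m) →
    ∀ x, M.prod x ≠ x → x < m := by
  intro M
  induction M with
  | nil => intro _ x hx; simp at hx
  | cons t M ih =>
    intro h x hx
    rw [List.prod_cons, Perm.mul_apply] at hx
    by_cases hMx : M.prod x = x
    · rw [hMx] at hx
      exact h t (by simp) x hx
    · exact ih (fun s hs => h s (by simp [hs])) x hMx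

lemma restr_list (m : ℕ) : ∀ (M : List (Perm ℕ)),
    (∀ t ∈ M, t.IsSwap ∧ ∀ x, t x ≠ x → x < m) →
    ∃ M' : List (Perm (Fin m)), M'.length = M.length ∧ (∀ t ∈ M', t.IsSwap) ∧
      M'.prod = restr m M.prod := by
  intro M
  induction M with
  | nil =>
    intro _
    exact ⟨[], rfl, by simp, by simp [restr_one]⟩
  | cons t M ih =>
    intro h
    obtain ⟨M', hlen, hsw, hp⟩ := ih (fun s hs => h s (by simp [hs]))
    have ht := h t (by simp)
    obtain ⟨a, b, hab, hteq⟩ := ht.1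
    have ha : a < m := by
      apply ht.2 a
      rw [hteq, Equiv.swap_apply_left]
      omega
    have hb : b < m := by
      apply ht.2 b
      rw [hteq, Equiv.swap_apply_right]
      omega
    refine ⟨Equiv.swap (⟨a, ha⟩ : Fin m) ⟨b, hb⟩ :: M', by simp [hlen], ?_, ?_⟩
    · intro s hs
      rcases List.mem_cons.mp hs with rfl | hs
      · exact ⟨_, _, by simp [Fin.ext_iff, hab], rfl⟩
      · exact hsw s hs
    · rw [List.prod_cons, List.prod_cons, hp, ← restr_swap m a b ha hb, ← hteq]
      rw [restr_mul m t M.prod ht.2 (prod_bound m M (fun s hs => (h s (by simp [hs])).2))]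

lemma no_odd_swap_identity (M : List (Perm ℕ)) (hM : ∀ t ∈ M, t.IsSwap)
    (hprod : M.prod = 1) (hodd : Odd M.length) : False := by
  obtain ⟨m, hm⟩ := swap_bound M hM
  obtain ⟨M', hlen, hsw, hp⟩ := restr_list m M (fun t ht => ⟨hM t ht, hm t ht⟩)
  rw [hprod, restr_one] at hp
  have hs := Equiv.Perm.sign_prod_list_swap hsw
  rw [hp, hlen, Equiv.Perm.sign_one, Odd.neg_one_pow hodd] at hs
  exact absurd hs (by decide)

/-! ### Main theorem ingredients -/

lemma cross_supported (n j i : ℕ) (hj1 : 1 ≤ j) (hj3 : j ≤ 3)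
    (h : crossPerm n j i ≠ i) : 1 ≤ i ∧ i ≤ n + 2 := by
  rw [crossPerm_apply] at h
  unfold crossFun at h
  by_cases hc : j ≤ i ∧ i < j + n
  · omega
  · rw [if_neg hc] at h
    exact absurd rfl h

end Stmt16Aux

theorem stmt16 (n : ℕ) (hn : n % 4 = 0) (hn4 : 4 ≤ n) (hn200 : n ≤ 200) :
    ∀ σ : Equiv.Perm ℕ, σ ∈ C n (n + 2) ↔
      ((∀ i, σ i ≠ i → 1 ≤ i ∧ i ≤ n + 2) ∧ IsEvenPerm σ) := by
  open Stmt16Aux in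
  have hn2 : n % 2 = 0 := by omega
  intro σ
  constructor
  · intro hσ
    let H : Subgroup (Equiv.Perm ℕ) :=
      { carrier := {τ | (∀ i, τ i ≠ i → 1 ≤ i ∧ i ≤ n + 2) ∧ IsEvenPerm τ}
        one_mem' := ⟨fun i hi => absurd rfl hi, isEvenPerm_one⟩
        mul_mem' := by
          rintro τ ρ ⟨hτ1, hτ2⟩ ⟨hρ1, hρ2⟩
          refine ⟨?_, isEvenPerm_mul hτ2 hρ2⟩
          intro i hi
          rw [Equiv.Perm.mul_apply] at hi
          by_cases h : ρ i = i
          · rw [h] at hi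
            exact hτ1 i hi
          · exact hρ1 i h
        inv_mem' := by
          rintro τ ⟨hτ1, hτ2⟩
          refine ⟨?_, isEvenPerm_inv hτ2⟩
          intro i hi
          apply hτ1 i
          intro h
          exact hi (Equiv.Perm.inv_eq_iff_eq.mpr h.symm)
      }
    have hle : C n (n + 2) ≤ H := by
      rw [C]
      apply Subgroup.closure_le H |>.2
      rintro τ ⟨j, hj1, hj2, rfl⟩
      exact ⟨fun i hi => cross_supported n j i hj1 (by omega) hi,
        isEvenPerm_crossPerm n j hn hn4⟩
    exact hle hσ
  · rintro ⟨hsupp, heven⟩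
    obtain ⟨L, hL, hLp, hLe⟩ := heven
    obtain ⟨l, hlb, hlp⟩ := sortDecomp n (n + 2) le_rfl σ hsupp
    have hlev : Even l.length := by
      by_contra hodd
      rw [Nat.not_even_iff_odd] at hodd
      apply no_odd_swap_identity ((l.map fun x => Equiv.swap x (x + 1)) ++ L.reverse)
      · intro t ht
        rcases List.mem_append.mp ht with h | h
        · obtain ⟨x, _, rfl⟩ := List.mem_map.mp h
          exact ⟨x, x + 1, by omega, rfl⟩
        · exact hL t (List.mem_reverse.mp h)
      · rw [List.prod_append, hlp, rev_prod_swaps L hL, hLp, mul_inv_cancel]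
      · rw [List.length_append, List.length_map, List.length_reverse]
        obtain ⟨c, hc⟩ := hodd
        obtain ⟨d, hd⟩ := hLe
        exact ⟨c + d, by omega⟩
    rw [← hlp]
    exact adjProd_mem n hn4 hn2 l hlb hlev
end
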